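/- arXiv:1705.00790 — 2 statements merged into one kernel-verified Lean document; each statement's English description precedes it below -/
import Mathlib

section
/- Let (j_!, j^*, j_*) and (i^*, i_*, i^!) be gluing data between triangulated categories D_U, D_Z, D_X (recollement). Given t-structures on D_U and D_Z, define D^{≤}(X) = {a | j^*a ∈ D^{≤}(U), i^*a ∈ D^{≤}(Z)} and D^{>}(X) = {a | j^*a ∈ D^{>}(U), i^!a ∈ D^{>}(Z)}. Then for a ∈ D^{≤}(X) and b ∈ D^{>}(X), Hom(a,b) = 0. -/
open CategoryTheory Category Limits Pretriangulated

variable {DU DZ DX : Type*}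
  [Category DU] [HasZeroObject DU] [Preadditive DU] [HasShift DU ℤ]
  [∀ n : ℤ, (shiftFunctor DU n).Additive] [Pretriangulated DU]
  [Category DZ] [HasZeroObject DZ] [Preadditive DZ] [HasShift DZ ℤ]
  [∀ n : ℤ, (shiftFunctor DZ n).Additive] [Pretriangulated DZ]
  [Category DX] [HasZeroObject DX] [Preadditive DX] [HasShift DX ℤ]
  [∀ n : ℤ, (shiftFunctor DX n).Additive] [Pretriangulated DX]

/-- A t-structure on a triangulated category. -/
structure IsTStructure {D : Type*} [Category D] [HasZeroObject D] [Preadditive D]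
    [HasShift D ℤ] [∀ n : ℤ, (shiftFunctor D n).Additive] [Pretriangulated D]
    (A B : Set D) : Prop where
  isoClosedA : ∀ ⦃x y : D⦄, (x ≅ y) → x ∈ A → y ∈ A
  isoClosedB : ∀ ⦃x y : D⦄, (x ≅ y) → x ∈ B → y ∈ B
  orth : ∀ a ∈ A, ∀ b ∈ B, ∀ f : a ⟶ b, f = 0
  shiftA : ∀ a ∈ A, a⟦(1 : ℤ)⟧ ∈ A
  shiftB : ∀ b ∈ B, b⟦(-1 : ℤ)⟧ ∈ B
  decomp : ∀ c, ∃ (a b : _) (_ : a ∈ A) (_ : b ∈ B)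
    (f : a ⟶ c) (g : c ⟶ b) (h : b ⟶ a⟦(1 : ℤ)⟧), Triangle.mk f g h ∈ distTriang D

/-- in a recollement `(j_!, j^*, j_*)`, `(i^*, i_*, i^!)` of `D_X` by `D_U` and
`D_Z`, given t-structures on `D_U` and `D_Z`, the glued classes
`D^{≤}(X) = {a | j^*a ∈ D^{≤}(U), i^*a ∈ D^{≤}(Z)}` and
`D^{>}(X) = {a | j^*a ∈ D^{>}(U), i^!a ∈ D^{>}(Z)}` are orthogonal: `Hom(a, b) = 0`. -/
theorem stmt12
    (jShriek : DU ⥤ DX) (jStar : DX ⥤ DU) (jLower : DU ⥤ DX)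
    (iStar : DX ⥤ DZ) (iLower : DZ ⥤ DX) (iShriek : DX ⥤ DZ)
    (adj1 : jShriek ⊣ jStar) (adj2 : jStar ⊣ jLower)
    (adj3 : iStar ⊣ iLower) (adj4 : iLower ⊣ iShriek)
    (hvanish : ∀ z : DZ, IsZero (jStar.obj (iLower.obj z)))
    (loc1 : ∀ A : DX, ∃ h : iLower.obj (iStar.obj A) ⟶ (jShriek.obj (jStar.obj A))⟦(1 : ℤ)⟧,
      Triangle.mk (adj1.counit.app A) (adj3.unit.app A) h ∈ distTriang DX)
    (loc2 : ∀ A : DX, ∃ h : jLower.obj (jStar.obj A) ⟶ (iLower.obj (iShriek.obj A))⟦(1 : ℤ)⟧,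
      Triangle.mk (adj4.counit.app A) (adj2.unit.app A) h ∈ distTriang DX)
    (hu1 : IsIso adj1.unit) (hc2 : IsIso adj2.counit)
    (hc3 : IsIso adj3.counit) (hu4 : IsIso adj4.unit)
    (AU BU : Set DU) (AZ BZ : Set DZ)
    (tU : IsTStructure AU BU) (tZ : IsTStructure AZ BZ) :
    ∀ a b : DX,
      jStar.obj a ∈ AU → iStar.obj a ∈ AZ →
      jStar.obj b ∈ BU → iShriek.obj b ∈ BZ →
      ∀ f : a ⟶ b, f = 0 := by
  intro a b haU haZ hbU hbZ f
  obtain ⟨h, hT⟩ := loc1 a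
  -- the composite j_!j^*a ⟶ a ⟶ b is zero
  have h1 : adj1.counit.app a ≫ f = 0 := by
    apply (adj1.homEquiv _ _).injective
    rw [tU.orth _ haU _ hbU ((adj1.homEquiv _ _) (adj1.counit.app a ≫ f)),
      tU.orth _ haU _ hbU ((adj1.homEquiv _ _) 0)]
  obtain ⟨g, hg⟩ := Triangle.yoneda_exact₂ _ hT f h1
  have h2 : g = 0 := by
    apply (adj4.homEquiv _ _).injective
    rw [tZ.orth _ haZ _ hbZ ((adj4.homEquiv _ _) g)]
    exact (tZ.orth _ haZ _ hbZ _).symm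
  rw [hg, h2, comp_zero]
  rfl
end

section
/- In a recollement of triangulated categories D_Z → D_X ← D_U with glued subcategories defined punctually as above from t-structures on D_U and D_Z, every object h ∈ D_X admits a distinguished triangle v → h → w → with v ∈ D^{≤}(X) and w ∈ D^{>}(X). Hence the glued pair is a t-structure on D_X. -/
open CategoryTheory Category Limits Pretriangulated

/-- If all maps `F.obj a ⟶ x` vanish, then all maps `a ⟶ G.obj x` vanish,
for an adjunction `F ⊣ G`. -/
lemma hom_eq_zero_of_adjunction {C D : Type*} [Category C] [Category D]
    [HasZeroMorphisms C] [HasZeroMorphisms D]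
    {F : C ⥤ D} {G : D ⥤ C} (adj : F ⊣ G) {a : C} {x : D}
    (hz : ∀ ψ : F.obj a ⟶ x, ψ = 0) (φ : a ⟶ G.obj x) : φ = 0 :=
  (adj.homEquiv a x).symm.injective
    (by rw [hz ((adj.homEquiv a x).symm φ), hz ((adj.homEquiv a x).symm 0)])

/-- Two distinguished triangles with isomorphic `obj₂`, `obj₃` compatibly with `mor₂`
have isomorphic `obj₁`. -/
noncomputable def isoObj₁OfDistTriang {C : Type*} [Category C] [HasZeroObject C]
    [Preadditive C] [HasShift C ℤ] [∀ n : ℤ, (shiftFunctor C n).Additive]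
    [Pretriangulated C] (T₁ T₂ : Triangle C)
    (hT₁ : T₁ ∈ distTriang C) (hT₂ : T₂ ∈ distTriang C)
    (e₂ : T₁.obj₂ ≅ T₂.obj₂) (e₃ : T₁.obj₃ ≅ T₂.obj₃)
    (comm : T₁.mor₂ ≫ e₃.hom = e₂.hom ≫ T₂.mor₂) : T₁.obj₁ ≅ T₂.obj₁ :=
  (shiftFunctor C (1 : ℤ)).preimageIso
    (Triangle.π₃.mapIso (isoTriangleOfIso₁₂ T₁.rotate T₂.rotate
      (rot_of_distTriang _ hT₁) (rot_of_distTriang _ hT₂) e₂ e₃ comm))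

/-- Two distinguished triangles with isomorphic `obj₁`, `obj₂` compatibly with `mor₁`
have isomorphic `obj₃`. -/
noncomputable def isoObj₃OfDistTriang {C : Type*} [Category C] [HasZeroObject C]
    [Preadditive C] [HasShift C ℤ] [∀ n : ℤ, (shiftFunctor C n).Additive]
    [Pretriangulated C] (T₁ T₂ : Triangle C)
    (hT₁ : T₁ ∈ distTriang C) (hT₂ : T₂ ∈ distTriang C)
    (e₁ : T₁.obj₁ ≅ T₂.obj₁) (e₂ : T₁.obj₂ ≅ T₂.obj₂)
    (comm : T₁.mor₁ ≫ e₂.hom = e₁.hom ≫ T₂.mor₁) : T₁.obj₃ ≅ T₂.obj₃ :=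
  Triangle.π₃.mapIso (isoTriangleOfIso₁₂ T₁ T₂ hT₁ hT₂ e₁ e₂ comm)

variable {DU DZ DX : Type*}
  [Category DU] [HasZeroObject DU] [Preadditive DU] [HasShift DU ℤ]
  [∀ n : ℤ, (shiftFunctor DU n).Additive] [Pretriangulated DU]
  [Category DZ] [HasZeroObject DZ] [Preadditive DZ] [HasShift DZ ℤ]
  [∀ n : ℤ, (shiftFunctor DZ n).Additive] [Pretriangulated DZ]
  [Category DX] [HasZeroObject DX] [Preadditive DX] [HasShift DX ℤ]
  [∀ n : ℤ, (shiftFunctor DX n).Additive] [Pretriangulated DX]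

/-- in a recollement of `D_X` by `D_U` and `D_Z` with t-structures on `D_U`
and `D_Z`, every object `h ∈ D_X` admits a distinguished triangle `v → h → w →` with
`v ∈ D^{≤}(X)` and `w ∈ D^{>}(X)` defined punctually; hence the glued pair is a
t-structure on `D_X` (the gluing theorem of BBD §1.4). -/
theorem stmt13
    (jShriek : DU ⥤ DX) (jStar : DX ⥤ DU) (jLower : DU ⥤ DX)
    (iStar : DX ⥤ DZ) (iLower : DZ ⥤ DX) (iShriek : DX ⥤ DZ)
    [jShriek.CommShift ℤ] [jShriek.IsTriangulated]
    [jStar.CommShift ℤ] [jStar.IsTriangulated]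
    [jLower.CommShift ℤ] [jLower.IsTriangulated]
    [iStar.CommShift ℤ] [iStar.IsTriangulated]
    [iLower.CommShift ℤ] [iLower.IsTriangulated]
    [iShriek.CommShift ℤ] [iShriek.IsTriangulated]
    (adj1 : jShriek ⊣ jStar) (adj2 : jStar ⊣ jLower)
    (adj3 : iStar ⊣ iLower) (adj4 : iLower ⊣ iShriek)
    (hvanish : ∀ z : DZ, IsZero (jStar.obj (iLower.obj z)))
    (loc1 : ∀ A : DX, ∃ h : iLower.obj (iStar.obj A) ⟶ (jShriek.obj (jStar.obj A))⟦(1 : ℤ)⟧,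
      Triangle.mk (adj1.counit.app A) (adj3.unit.app A) h ∈ distTriang DX)
    (loc2 : ∀ A : DX, ∃ h : jLower.obj (jStar.obj A) ⟶ (iLower.obj (iShriek.obj A))⟦(1 : ℤ)⟧,
      Triangle.mk (adj4.counit.app A) (adj2.unit.app A) h ∈ distTriang DX)
    (hu1 : IsIso adj1.unit) (hc2 : IsIso adj2.counit)
    (hc3 : IsIso adj3.counit) (hu4 : IsIso adj4.unit)
    (AU BU : Set DU) (AZ BZ : Set DZ)
    (tU : IsTStructure AU BU) (tZ : IsTStructure AZ BZ) :
    letI AX : Set DX := {a | jStar.obj a ∈ AU ∧ iStar.obj a ∈ AZ}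
    letI BX : Set DX := {a | jStar.obj a ∈ BU ∧ iShriek.obj a ∈ BZ}
    (∀ h : DX, ∃ (v w : DX) (_ : v ∈ AX) (_ : w ∈ BX)
      (f : v ⟶ h) (g : h ⟶ w) (δ : w ⟶ v⟦(1 : ℤ)⟧),
      Triangle.mk f g δ ∈ distTriang DX) ∧
    IsTStructure AX BX := by
  haveI := hu1; haveI := hc2; haveI := hc3; haveI := hu4
  -- `i^! j_* = 0`
  have hz2 : ∀ u : DU, IsZero (iShriek.obj (jLower.obj u)) := by
    intro u
    rw [IsZero.iff_id_eq_zero]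
    exact hom_eq_zero_of_adjunction adj4
      (fun χ => hom_eq_zero_of_adjunction adj2
        (fun ξ => (hvanish _).eq_of_src ξ 0) χ) (𝟙 _)
  have key : ∀ h : DX, ∃ (v w : DX)
      (_ : v ∈ {a : DX | jStar.obj a ∈ AU ∧ iStar.obj a ∈ AZ})
      (_ : w ∈ {a : DX | jStar.obj a ∈ BU ∧ iShriek.obj a ∈ BZ})
      (f : v ⟶ h) (g : h ⟶ w) (δ : w ⟶ v⟦(1 : ℤ)⟧),
      Triangle.mk f g δ ∈ distTriang DX := by
    intro h
    -- Step 1: truncate `j^* h` in `DU`.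
    obtain ⟨aU, bU, haU, hbU, α, β, γ, hTU⟩ := tU.decomp (jStar.obj h)
    -- Step 2: fiber of `h → j_* bU`.
    obtain ⟨v₁, p₁, δ₁, hT₁⟩ :=
      distinguished_cocone_triangle₁ (adj2.unit.app h ≫ jLower.map β)
    have hT₁' := jStar.map_distinguished _ hT₁
    have comm₁ : (jStar.mapTriangle.obj
          (Triangle.mk p₁ (adj2.unit.app h ≫ jLower.map β) δ₁)).mor₂
        ≫ (asIso (adj2.counit.app bU)).hom = (Iso.refl (jStar.obj h)).hom ≫ β := by
      dsimp
      exact (show jStar.map (adj2.unit.app h ≫ jLower.map β) ≫ adj2.counit.app bU = 𝟙 _ ≫ β by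
        simp)
    let eU := isoObj₁OfDistTriang _ (Triangle.mk α β γ) hT₁' hTU (Iso.refl _)
      (@asIso _ _ _ _ (adj2.counit.app bU) (NatIso.isIso_app_of_isIso adj2.counit bU)) comm₁
    have hv₁U : jStar.obj v₁ ∈ AU := tU.isoClosedA eU.symm haU
    -- Step 3: truncate `i^* v₁` in `DZ`.
    obtain ⟨aZ, bZ, haZ, hbZ, α', β', γ', hTZ⟩ := tZ.decomp (iStar.obj v₁)
    -- Step 4: fiber of `v₁ → i_* bZ`.
    obtain ⟨v, p₂, δ₂, hT₂⟩ :=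
      distinguished_cocone_triangle₁ (adj3.unit.app v₁ ≫ iLower.map β')
    have hT₂' := iStar.map_distinguished _ hT₂
    have comm₂ : (iStar.mapTriangle.obj
          (Triangle.mk p₂ (adj3.unit.app v₁ ≫ iLower.map β') δ₂)).mor₂
        ≫ (asIso (adj3.counit.app bZ)).hom = (Iso.refl (iStar.obj v₁)).hom ≫ β' := by
      dsimp
      exact (show iStar.map (adj3.unit.app v₁ ≫ iLower.map β') ≫ adj3.counit.app bZ = 𝟙 _ ≫ β' by
        simp)
    let eZ := isoObj₁OfDistTriang _ (Triangle.mk α' β' γ') hT₂' hTZ (Iso.refl _)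
      (@asIso _ _ _ _ (adj3.counit.app bZ) (NatIso.isIso_app_of_isIso adj3.counit bZ)) comm₂
    have hvZ : iStar.obj v ∈ AZ := tZ.isoClosedA eZ.symm haZ
    haveI : IsIso (jStar.map p₂) :=
      (Triangle.isZero₃_iff_isIso₁ _ (jStar.map_distinguished _ hT₂)).1 (hvanish bZ)
    have hvU : jStar.obj v ∈ AU :=
      tU.isoClosedA (asIso (jStar.map p₂) ≪≫ eU).symm haU
    -- Step 5: cone of `v → h`.
    obtain ⟨w, g, δ, hTw⟩ := distinguished_cocone_triangle (p₂ ≫ p₁)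
    -- `j^* w ≅ bU`
    have commw : (jStar.mapTriangle.obj (Triangle.mk (p₂ ≫ p₁) g δ)).mor₁
        ≫ (Iso.refl (jStar.obj h)).hom
        = (asIso (jStar.map p₂)).hom ≫ (jStar.mapTriangle.obj
          (Triangle.mk p₁ (adj2.unit.app h ≫ jLower.map β) δ₁)).mor₁ := by
      dsimp
      exact (comp_id _).trans (jStar.map_comp p₂ p₁)
    let ewU := isoObj₃OfDistTriang _ _ (jStar.map_distinguished _ hTw) hT₁'
      (@asIso _ _ _ _ (jStar.map p₂) (inferInstanceAs (IsIso (jStar.map p₂)))) (Iso.refl _) commw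
    have hwU : jStar.obj w ∈ BU :=
      tU.isoClosedB (ewU ≪≫ @asIso _ _ _ _ (adj2.counit.app bU) (NatIso.isIso_app_of_isIso adj2.counit bU)).symm hbU
    -- `i^! w ≅ bZ`
    haveI : IsIso (iShriek.map p₁) :=
      (Triangle.isZero₃_iff_isIso₁ _ (iShriek.map_distinguished _ hT₁)).1 (hz2 bU)
    have commw' : (iShriek.mapTriangle.obj (Triangle.mk (p₂ ≫ p₁) g δ)).mor₁
        ≫ (asIso (iShriek.map p₁)).symm.hom
        = (Iso.refl (iShriek.obj v)).hom ≫ (iShriek.mapTriangle.obj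
          (Triangle.mk p₂ (adj3.unit.app v₁ ≫ iLower.map β') δ₂)).mor₁ := by
      dsimp
      exact (show iShriek.map (p₂ ≫ p₁) ≫ inv (iShriek.map p₁) = 𝟙 _ ≫ iShriek.map p₂ by
        rw [Functor.map_comp, assoc, IsIso.hom_inv_id, comp_id, id_comp])
    let ewZ := isoObj₃OfDistTriang _ _ (iShriek.map_distinguished _ hTw)
      (iShriek.map_distinguished _ hT₂) (Iso.refl _) (asIso (iShriek.map p₁)).symm commw'
    have hwZ : iShriek.obj w ∈ BZ :=
      tZ.isoClosedB (ewZ ≪≫ (asIso (adj4.unit.app bZ)).symm).symm hbZ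
    exact ⟨v, w, ⟨hvU, hvZ⟩, ⟨hwU, hwZ⟩, p₂ ≫ p₁, g, δ, hTw⟩
  refine ⟨key, ?_, ?_, ?_, ?_, ?_, key⟩
  · rintro x y e ⟨h1, h2⟩
    exact ⟨tU.isoClosedA (jStar.mapIso e) h1, tZ.isoClosedA (iStar.mapIso e) h2⟩
  · rintro x y e ⟨h1, h2⟩
    exact ⟨tU.isoClosedB (jStar.mapIso e) h1, tZ.isoClosedB (iShriek.mapIso e) h2⟩
  · intro a ha b hb f
    obtain ⟨δb, hTb⟩ := loc2 b
    have hf2 : f ≫ adj2.unit.app b = 0 :=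
      hom_eq_zero_of_adjunction adj2 (fun ψ => tU.orth _ ha.1 _ hb.1 ψ) _
    obtain ⟨g', hg'⟩ := Triangle.coyoneda_exact₂ _ hTb f hf2
    rw [hg', hom_eq_zero_of_adjunction adj3 (fun ψ => tZ.orth _ ha.2 _ hb.2 ψ) g']
    exact zero_comp
  · intro a ha
    exact ⟨tU.isoClosedA ((jStar.commShiftIso (1 : ℤ)).app a).symm (tU.shiftA _ ha.1),
           tZ.isoClosedA ((iStar.commShiftIso (1 : ℤ)).app a).symm (tZ.shiftA _ ha.2)⟩
  · intro b hb
    exact ⟨tU.isoClosedB ((jStar.commShiftIso (-1 : ℤ)).app b).symm (tU.shiftB _ hb.1),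
           tZ.isoClosedB ((iShriek.commShiftIso (-1 : ℤ)).app b).symm (tZ.shiftB _ hb.2)⟩
end
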